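/- Let m = m(n) and t = t(n) be given, for each n let M be an m×n random 0/1 matrix with independent Bernoulli(1/2) entries, and let E_n denote the event that every row of M has an even number of 1's. If Pr( disc(M) ≤ t(n) | E_n ) tends to 1 as n → ∞, then Pr( disc(M) ≤ t(n) + 1 ) tends to 1 as n → ∞. -/

import Mathlib

open scoped Classical
open Finset Filter

/-- Probability of an event in a finite uniform probability space. -/
noncomputable def pr {Ω : Type*} [Fintype Ω] (p : Ω → Prop) : ℝ :=
  ((Finset.univ.filter p).card : ℝ) / (Fintype.card Ω : ℝ)

/-- `discLE M x` means the discrepancy of the 0/1 matrix `M` is at most `x`, i.e. there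
is a `±1` coloring `u` with `‖Mu‖_∞ ≤ x`. -/
def discLE {m n : ℕ} (M : Fin m → Fin n → Bool) (x : ℝ) : Prop :=
  ∃ u : Fin n → ℤ, (∀ i, u i = 1 ∨ u i = -1) ∧
    ∀ e : Fin m, |∑ i, (if M e i then (u i : ℝ) else 0)| ≤ x

/-- Every row of `M` has an even number of `1`'s. -/
def evenRows {m n : ℕ} (M : Fin m → Fin n → Bool) : Prop :=
  ∀ e : Fin m, Even (Finset.univ.filter (fun i => M e i = true)).card

section aux
variable {m n : ℕ}

/-- Adjust the entry in column `0` of each row so that the row has an even number of ones. -/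
noncomputable def fixCol (hn : 0 < n) (M : Fin m → Fin n → Bool) : Fin m → Fin n → Bool :=
  fun e i => if i = (⟨0, hn⟩ : Fin n) then
      decide (Odd (((univ.erase (⟨0, hn⟩ : Fin n)).filter (fun j => M e j = true)).card))
    else M e i

lemma filter_split (z : Fin n) (P : Fin n → Prop) [DecidablePred P] :
    (univ.filter P).card
      = ((univ.erase z).filter P).card + (if P z then 1 else 0) := by
  nth_rewrite 1 [show (univ : Finset (Fin n)) = insert z (univ.erase z) from
    (Finset.insert_erase (mem_univ z)).symm]
  rw [Finset.filter_insert]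
  split_ifs with hP
  · rw [Finset.card_insert_of_notMem (by simp)]
  · simp

lemma fixCol_filter_erase (hn : 0 < n) (M : Fin m → Fin n → Bool) (e : Fin m) :
    (univ.erase (⟨0, hn⟩ : Fin n)).filter (fun j => fixCol hn M e j = true)
      = (univ.erase (⟨0, hn⟩ : Fin n)).filter (fun j => M e j = true) := by
  apply Finset.filter_congr
  intro j hj
  simp only [Finset.mem_erase] at hj
  simp [fixCol, hj.1]

lemma evenRows_fixCol (hn : 0 < n) (M : Fin m → Fin n → Bool) :
    evenRows (fixCol hn M) := by
  intro e
  set z : Fin n := ⟨0, hn⟩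
  rw [filter_split z, fixCol_filter_erase]
  set c := ((univ.erase z).filter (fun j => M e j = true)).card with hc
  have hz : fixCol hn M e z = decide (Odd c) := by simp [fixCol, z, hc]
  by_cases hodd : Odd c
  · simp only [hz, hodd, decide_eq_true (by exact hodd), if_pos rfl]
    exact hodd.add_one
  · simp only [hz, decide_eq_false (by exact hodd)]
    rw [if_neg (by simp)]
    simpa using Nat.not_odd_iff_even.mp hodd

lemma fixCol_reconstruct (hn : 0 < n) (N : Fin m → Fin n → Bool) (hN : evenRows N)
    (c : Fin m → Bool) :
    fixCol hn (fun e i => if i = (⟨0, hn⟩ : Fin n) then c e else N e i) = N := by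
  set z : Fin n := ⟨0, hn⟩
  funext e i
  by_cases hi : i = z
  · subst hi
    have herase : ((univ.erase z).filter
        (fun j => (if j = z then c e else N e j) = true))
        = (univ.erase z).filter (fun j => N e j = true) := by
      apply Finset.filter_congr
      intro j hj
      simp only [Finset.mem_erase] at hj
      simp [hj.1]
    have hNe := hN e
    rw [filter_split z] at hNe
    set c' := ((univ.erase z).filter (fun j => N e j = true)).card with hc'
    simp only [fixCol, if_pos rfl]
    rw [show ((⟨0, hn⟩ : Fin n) = z) from rfl, herase, ← hc']
    by_cases hNz : N e z = true
    · simp only [hNz, if_pos] at hNe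
      have : Odd c' := by rcases hNe with ⟨k, hk⟩; exact ⟨k - 1, by omega⟩
      simp [this, hNz]
    · simp only [hNz] at hNe
      rw [if_neg (by simp [hNz])] at hNe
      have : ¬ Odd c' := by simpa using Nat.not_odd_iff_even.mpr (by simpa using hNe)
      simp only [this, decide_eq_false_iff_not]
      simp at hNz
      simp [hNz]
  · simp [fixCol, show i ≠ (⟨0, hn⟩ : Fin n) from hi, hi]

lemma card_fiber (hn : 0 < n) (S : Finset (Fin m → Fin n → Bool))
    (hS : ∀ N ∈ S, evenRows N) :
    (univ.filter (fun M => fixCol hn M ∈ S)).card = S.card * 2 ^ m := by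
  set z : Fin n := ⟨0, hn⟩
  have hcard : (S ×ˢ (univ : Finset (Fin m → Bool))).card = S.card * 2 ^ m := by
    rw [Finset.card_product]
    simp [Fintype.card_fun]
  rw [← hcard]
  apply Finset.card_nbij'
    (fun M => (fixCol hn M, fun e => M e z))
    (fun p => fun e i => if i = z then p.2 e else p.1 e i)
  · intro M hM
    simp only [Finset.mem_coe, Finset.mem_filter, Finset.mem_univ, true_and] at hM
    simp [Finset.mem_product, hM]
  · intro p hp
    simp only [Finset.mem_coe, Finset.mem_product, Finset.mem_univ, and_true] at hp
    simp only [Finset.mem_coe, Finset.mem_filter, Finset.mem_univ, true_and]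
    rw [fixCol_reconstruct hn p.1 (hS p.1 hp) p.2]
    exact hp
  · intro M _
    funext e i
    by_cases hi : i = z
    · subst hi; simp
    · simp [fixCol, show i ≠ (⟨0, hn⟩ : Fin n) from hi, hi]
  · intro p hp
    simp only [Finset.mem_coe, Finset.mem_product, Finset.mem_univ, and_true] at hp
    dsimp only
    rw [fixCol_reconstruct hn p.1 (hS p.1 hp) p.2]
    ext e <;> simp

lemma discLE_of_fixCol (hn : 0 < n) (M : Fin m → Fin n → Bool) (x : ℝ)
    (h : discLE (fixCol hn M) x) : discLE M (x + 1) := by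
  obtain ⟨u, hu, hb⟩ := h
  refine ⟨u, hu, fun e => ?_⟩
  set z : Fin n := ⟨0, hn⟩
  have hsplit : ∀ g : Fin n → Bool,
      ∑ i, (if g i then (u i : ℝ) else 0)
        = (if g z then (u z : ℝ) else 0) + ∑ i ∈ univ.erase z, (if g i then (u i : ℝ) else 0) :=
    fun g => (Finset.add_sum_erase univ _ (mem_univ z)).symm
  have hrest : ∑ i ∈ univ.erase z, (if M e i then (u i : ℝ) else 0)
      = ∑ i ∈ univ.erase z, (if fixCol hn M e i then (u i : ℝ) else 0) := by
    apply Finset.sum_congr rfl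
    intro i hi
    simp only [Finset.mem_erase] at hi
    simp [fixCol, show i ≠ (⟨0, hn⟩ : Fin n) from hi.1]
  set a : ℝ := if M e z then (u z : ℝ) else 0
  set b : ℝ := if fixCol hn M e z then (u z : ℝ) else 0
  set r : ℝ := ∑ i ∈ univ.erase z, (if fixCol hn M e i then (u i : ℝ) else 0)
  have h1 : ∑ i, (if M e i then (u i : ℝ) else 0) = a + r := by
    rw [hsplit (M e), hrest]
  have h2 : |b + r| ≤ x := by rw [← hsplit (fixCol hn M e)]; exact hb e
  have hab : |a - b| ≤ 1 := by
    have huz : |(u z : ℝ)| = 1 := by rcases hu z with h | h <;> simp [h]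
    by_cases hM : M e z = true <;> by_cases hF : fixCol hn M e z = true <;>
      simp [a, b, hM, hF, huz, abs_sub_comm]
  calc |∑ i, (if M e i then (u i : ℝ) else 0)| = |(b + r) + (a - b)| := by rw [h1]; ring_nf
    _ ≤ |b + r| + |a - b| := abs_add_le _ _
    _ ≤ x + 1 := add_le_add h2 hab

lemma pr_eq {Ω : Type*} [Fintype Ω] (p : Ω → Prop) [DecidablePred p] :
    pr p = ((Finset.univ.filter p).card : ℝ) / (Fintype.card Ω : ℝ) := by
  unfold pr
  rw [Finset.filter_congr_decidable]

lemma pr_key (hn : 0 < n) (x : ℝ) :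
    pr (fun M : Fin m → Fin n → Bool => discLE M x ∧ evenRows M) /
        pr (fun M : Fin m → Fin n → Bool => evenRows M)
      ≤ pr (fun M : Fin m → Fin n → Bool => discLE M (x + 1)) := by
  rw [pr_eq, pr_eq, pr_eq]
  set C := (Fintype.card (Fin m → Fin n → Bool) : ℝ) with hCdef
  set Bf := univ.filter (fun M : Fin m → Fin n → Bool => discLE M x ∧ evenRows M) with hBf
  set Ef := univ.filter (fun M : Fin m → Fin n → Bool => evenRows M) with hEf
  set Af := univ.filter (fun M : Fin m → Fin n → Bool => discLE M (x + 1)) with hAf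
  have hCE : Fintype.card (Fin m → Fin n → Bool) = Ef.card * 2 ^ m := by
    have := card_fiber hn Ef (fun N hN => (Finset.mem_filter.mp hN).2)
    rw [← this]
    rw [Finset.filter_true_of_mem, Finset.card_univ]
    intro M _
    simp only [hEf, Finset.mem_filter, Finset.mem_univ, true_and]
    exact evenRows_fixCol hn M
  have hBA : Bf.card * 2 ^ m ≤ Af.card := by
    rw [← card_fiber hn Bf (fun N hN => (Finset.mem_filter.mp hN).2.2)]
    apply Finset.card_le_card
    intro M hM
    simp only [Finset.mem_filter, Finset.mem_univ, true_and] at hM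
    rw [hBf, Finset.mem_filter] at hM
    rw [hAf]
    simp only [Finset.mem_filter, Finset.mem_univ, true_and]
    exact discLE_of_fixCol hn M x hM.2.1
  have hEpos : 0 < Ef.card := by
    apply Finset.card_pos.mpr
    refine ⟨fun _ _ => false, ?_⟩
    simp only [hEf, Finset.mem_filter, Finset.mem_univ, true_and]
    intro e
    simp [evenRows]
  have hCpos : (0 : ℝ) < C := by
    rw [hCdef]
    exact_mod_cast Fintype.card_pos
  have hEposR : (0 : ℝ) < (Ef.card : ℝ) := by exact_mod_cast hEpos
  have heq : ((Bf.card : ℝ) / C) / ((Ef.card : ℝ) / C) = (Bf.card : ℝ) / (Ef.card : ℝ) := by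
    field_simp
  rw [heq, div_le_div_iff₀ hEposR hCpos]
  have hCE' : C = (Ef.card : ℝ) * 2 ^ m := by
    rw [hCdef, hCE]; push_cast; ring
  have hBA' : (Bf.card : ℝ) * 2 ^ m ≤ (Af.card : ℝ) := by exact_mod_cast hBA
  rw [hCE']
  nlinarith [hEposR.le, hBA']

lemma pr_le_one {Ω : Type*} [Fintype Ω] [Nonempty Ω] (p : Ω → Prop) : pr p ≤ 1 := by
  unfold pr
  rw [div_le_one (by exact_mod_cast Fintype.card_pos)]
  exact_mod_cast (Finset.card_filter_le univ p).trans_eq Finset.card_univ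

end aux

theorem even_rows_conditioning (m t : ℕ → ℕ)
    (h : Tendsto (fun n : ℕ =>
        pr (fun M : Fin (m n) → Fin n → Bool => discLE M (t n) ∧ evenRows M) /
          pr (fun M : Fin (m n) → Fin n → Bool => evenRows M))
      atTop (nhds 1)) :
    Tendsto (fun n : ℕ =>
        pr (fun M : Fin (m n) → Fin n → Bool => discLE M ((t n : ℝ) + 1)))
      atTop (nhds 1) := by
  apply tendsto_of_tendsto_of_tendsto_of_le_of_le' h tendsto_const_nhds
  · filter_upwards [eventually_gt_atTop 0] with n hn
    exact pr_key hn (t n)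
  · filter_upwards with n
    exact pr_le_one _
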